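/- arXiv:2208.07289 — 2 statements merged into one kernel-verified Lean document; each statement's English description precedes it below -/
import Mathlib

section
/- Let F : ℝⁿ → ℝ and suppose there exist row vectors A, C and scalars b, d such that for all x and all Δx with ‖Δx‖_∞ ≤ δ, A·Δx + b ≤ F(x + Δx) - F(x) ≤ C·Δx + d. If max(|b - ‖A‖₁·δ|, |d + ‖C‖₁·δ|) ≤ ε, then F is (δ, ε)-globally robust: for all x and all Δx with ‖Δx‖_∞ ≤ δ, |F(x + Δx) - F(x)| ≤ ε. -/
open Finset in
/-- Sufficient condition for (δ, ε)-global robustness from linear bounds on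
the output variation. -/
theorem global_robustness_sufficient {n : ℕ} (F : (Fin n → ℝ) → ℝ)
    (A C : Fin n → ℝ) (b d δ ε : ℝ)
    (hbound : ∀ (x Δx : Fin n → ℝ), (∀ i, |Δx i| ≤ δ) →
      (∑ i, A i * Δx i) + b ≤ F (x + Δx) - F x ∧
      F (x + Δx) - F x ≤ (∑ i, C i * Δx i) + d)
    (hcond : max |b - (∑ i, |A i|) * δ| |d + (∑ i, |C i|) * δ| ≤ ε) :
    ∀ (x Δx : Fin n → ℝ), (∀ i, |Δx i| ≤ δ) → |F (x + Δx) - F x| ≤ ε := by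
  intro x Δx h
  obtain ⟨h1, h2⟩ := hbound x Δx h
  have hA : |∑ i, A i * Δx i| ≤ (∑ i, |A i|) * δ := by
    calc |∑ i, A i * Δx i| ≤ ∑ i, |A i * Δx i| := Finset.abs_sum_le_sum_abs _ _
      _ ≤ ∑ i, |A i| * δ := Finset.sum_le_sum fun i _ => by
          rw [abs_mul]; exact mul_le_mul_of_nonneg_left (h i) (abs_nonneg _)
      _ = (∑ i, |A i|) * δ := (Finset.sum_mul _ _ _).symm
  have hC : |∑ i, C i * Δx i| ≤ (∑ i, |C i|) * δ := by
    calc |∑ i, C i * Δx i| ≤ ∑ i, |C i * Δx i| := Finset.abs_sum_le_sum_abs _ _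
      _ ≤ ∑ i, |C i| * δ := Finset.sum_le_sum fun i _ => by
          rw [abs_mul]; exact mul_le_mul_of_nonneg_left (h i) (abs_nonneg _)
      _ = (∑ i, |C i|) * δ := (Finset.sum_mul _ _ _).symm
  have hb : |b - (∑ i, |A i|) * δ| ≤ ε := le_trans (le_max_left _ _) hcond
  have hd : |d + (∑ i, |C i|) * δ| ≤ ε := le_trans (le_max_right _ _) hcond
  rw [abs_le] at hA hC hb hd ⊢
  constructor <;> linarith
end

section
/- Backward propagation step soundness: suppose Δout ≥ Σ_{i ∈ I} A_i·Δx_i + b holds for all admissible perturbations, and for a particular index i₀ ∈ I the distance Δx_{i₀} satisfies Ψ_j Δx_j + Ψ_k Δx_k + λ ≤ Δx_{i₀} ≤ Ω_j Δx_j + Ω_k Δx_k + μ. Define A'_j = A_j + A_{i₀}⁺Ψ_j + A_{i₀}⁻Ω_j, A'_k = A_k + A_{i₀}⁺Ψ_k + A_{i₀}⁻Ω_k, A'_h = A_h for h ∉ {i₀, j, k}, and b' = b + A_{i₀}⁺λ + A_{i₀}⁻μ, where a⁺ = max(a,0), a⁻ = min(a,0). Then Δout ≥ Σ_{h ∈ (I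 ∖ {i₀}) ∪ {j,k}} A'_h·Δx_h + b'. -/
open Finset in
/-- Inductive step of backward symbolic propagation: eliminating the distance
`Δx_{i₀}` from a linear lower bound by substituting the layer's linear distance
bounds, with the coefficient split by sign. -/
theorem backward_propagation_step {ι : Type*} [DecidableEq ι]
    (I : Finset ι) (A : ι → ℝ) (Δ : ι → ℝ) (b Δout : ℝ)
    (i₀ j k : ι) (hi₀ : i₀ ∈ I) (hji : j ≠ i₀) (hki : k ≠ i₀) (hjk : j ≠ k)
    (Ψj Ψk lam Ωj Ωk μ : ℝ)
    (hlow : Δout ≥ (∑ h ∈ I, A h * Δ h) + b)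
    (hlayer : Ψj * Δ j + Ψk * Δ k + lam ≤ Δ i₀ ∧
              Δ i₀ ≤ Ωj * Δ j + Ωk * Δ k + μ) :
    Δout ≥ (∑ h ∈ I.erase i₀ ∪ {j, k},
        (if h = j then (if j ∈ I then A j else 0) + max (A i₀) 0 * Ψj + min (A i₀) 0 * Ωj
         else if h = k then (if k ∈ I then A k else 0) + max (A i₀) 0 * Ψk + min (A i₀) 0 * Ωk
         else A h) * Δ h)
      + (b + max (A i₀) 0 * lam + min (A i₀) 0 * μ) := by
  obtain ⟨hL, hU⟩ := hlayer
  set p := max (A i₀) 0 with hp'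
  set m := min (A i₀) 0 with hm'
  have hp : 0 ≤ p := le_max_right _ _
  have hm : m ≤ 0 := min_le_right _ _
  have hpm : p + m = A i₀ := by rw [hp', hm', max_add_min, add_zero]
  set S := I.erase i₀ with hS
  set T := S ∪ {j, k} with hT
  have hjT : j ∈ T := by simp [hT]
  have hkT : k ∈ T := by simp [hT]
  -- rewrite the new sum
  have hsplit : ∀ h ∈ T,
      (if h = j then (if j ∈ I then A j else 0) + p * Ψj + m * Ωj
       else if h = k then (if k ∈ I then A k else 0) + p * Ψk + m * Ωk
       else A h) * Δ h
      = (if h ∈ I then A h else 0) * Δ h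
        + (if h = j then (p * Ψj + m * Ωj) * Δ j else 0)
        + (if h = k then (p * Ψk + m * Ωk) * Δ k else 0) := by
    intro h hh
    by_cases h1 : h = j
    · subst h1; by_cases hI : h ∈ I <;> simp [hjk, hI] <;> ring
    · by_cases h2 : h = k
      · subst h2; by_cases hI : h ∈ I <;> simp [h1, Ne.symm hjk, hI] <;> ring
      · have hhS : h ∈ S := by
          rcases Finset.mem_union.1 hh with h3 | h3
          · exact h3
          · simp only [Finset.mem_insert, Finset.mem_singleton] at h3
            tauto
        have : h ∈ I := Finset.mem_of_mem_erase hhS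
        simp [h1, h2, this]
  have hTI : T ∩ I = S := by
    ext x
    simp only [hT, hS, Finset.mem_inter, Finset.mem_union, Finset.mem_erase,
      Finset.mem_insert, Finset.mem_singleton]
    constructor
    · rintro ⟨hx1 | hx1, hx2⟩
      · exact hx1
      · rcases hx1 with rfl | rfl
        · exact ⟨hji, hx2⟩
        · exact ⟨hki, hx2⟩
    · intro hx
      exact ⟨Or.inl hx, hx.2⟩
  have hsum : ∑ h ∈ T,
      (if h = j then (if j ∈ I then A j else 0) + p * Ψj + m * Ωj
       else if h = k then (if k ∈ I then A k else 0) + p * Ψk + m * Ωk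
       else A h) * Δ h
      = (∑ h ∈ S, A h * Δ h) + (p * Ψj + m * Ωj) * Δ j + (p * Ψk + m * Ωk) * Δ k := by
    rw [Finset.sum_congr rfl hsplit]
    rw [Finset.sum_add_distrib, Finset.sum_add_distrib]
    rw [Finset.sum_ite_eq' T j, Finset.sum_ite_eq' T k, if_pos hjT, if_pos hkT]
    congr 1
    congr 1
    have : ∀ h ∈ T, (if h ∈ I then A h else 0) * Δ h
        = if h ∈ I then A h * Δ h else 0 := by
      intro h _; split <;> simp
    rw [Finset.sum_congr rfl this, Finset.sum_ite_mem, hTI]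
  have hIsum : ∑ h ∈ I, A h * Δ h = A i₀ * Δ i₀ + ∑ h ∈ S, A h * Δ h :=
    (Finset.add_sum_erase I _ hi₀).symm
  rw [hsum]
  rw [hIsum] at hlow
  have key : (p * Ψj + m * Ωj) * Δ j + (p * Ψk + m * Ωk) * Δ k + (p * lam + m * μ)
      ≤ A i₀ * Δ i₀ := by
    have hA : A i₀ * Δ i₀ = p * Δ i₀ + m * Δ i₀ := by rw [← hpm]; ring
    nlinarith [mul_le_mul_of_nonneg_left hL hp, mul_le_mul_of_nonpos_left hU hm, hA]
  linarith
end
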